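/- Let G be a homeomorphism of a topological space Σ commuting with an involution σ, and suppose G permutes the connected components C₁,…,C_m of Σ^σ. Then the connected components of the fixed locus M_G^{σ_G} of the induced involution on the mapping torus M_G are in natural bijection with the cycles of the permutation induced by G on {C₁,…,C_m}. -/

import Mathlib

variable {S : Type} [TopologicalSpace S]

/-- The gluing relation for the mapping torus of `G : Σ → Σ`: `(1, z) ∼ (0, G z)`. -/
def MTRel (G : S → S) : (unitInterval × S) → (unitInterval × S) → Prop := fun p q =>
  p.1 = 1 ∧ q.1 = 0 ∧ q.2 = G p.2

/-- The mapping torus `M_G = ([0,1] × Σ)/((1,z) ∼ (0, G z))`, with the quotient topology. -/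
abbrev MappingTorus (G : S → S) : Type := Quot (MTRel G)

/-- The involution `σ_G [s, z] = [s, σ z]` of the mapping torus, well defined whenever `σ`
commutes with `G`. -/
def mtInvol (G σ : S → S) (h : ∀ z, G (σ z) = σ (G z)) :
    MappingTorus G → MappingTorus G :=
  Quot.map (fun p => (p.1, σ p.2)) (by
    rintro p q ⟨h1, h2, h3⟩
    exact ⟨h1, h2, by show σ q.2 = G (σ p.2); rw [h3]; exact (h p.2).symm⟩)

/-- The fixed locus `Σ^σ`. -/
abbrev FixLocus (σ : S → S) : Type := {z : S // σ z = z}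

/-- The restriction of `G` to the fixed locus `Σ^σ` (using that `G` commutes with `σ`). -/
def fixRestrict (G σ : S → S) (h : ∀ z, G (σ z) = σ (G z)) :
    FixLocus σ → FixLocus σ := fun z =>
  ⟨G z.1, ((h z.1).symm.trans (congrArg G z.2) : σ (G z.1) = G z.1)⟩

/-- The natural embedding of the mapping torus of `G|_{Σ^σ}` into `M_G`. -/
def mtEmbed (G σ : S → S) (h : ∀ z, G (σ z) = σ (G z)) :
    MappingTorus (fixRestrict G σ h) → MappingTorus G :=
  Quot.map (fun p => (p.1, p.2.1)) (by
    rintro p q ⟨h1, h2, h3⟩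
    exact ⟨h1, h2, by show (q.2 : S) = G (p.2 : S); rw [h3]; rfl⟩)

lemma discreteTopology_connectedComponents_of_finite {X : Type*} [TopologicalSpace X]
    (h : Finite (ConnectedComponents X)) : DiscreteTopology (ConnectedComponents X) := by
  have hclosed : ∀ c : ConnectedComponents X,
      IsClosed ((ConnectedComponents.mk : X → _) ⁻¹' {c}) := by
    intro c
    obtain ⟨x, rfl⟩ := ConnectedComponents.surjective_coe c
    rw [connectedComponents_preimage_singleton]
    exact isClosed_connectedComponent
  rw [discreteTopology_iff_isOpen_singleton]
  intro c
  rw [← ConnectedComponents.isQuotientMap_coe.isOpen_preimage]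
  have key : (ConnectedComponents.mk : X → _) ⁻¹' {c} =
      (⋃ c' ∈ ({c}ᶜ : Set (ConnectedComponents X)),
        (ConnectedComponents.mk : X → _) ⁻¹' {c'})ᶜ := by
    ext x
    simp only [Set.mem_preimage, Set.mem_singleton_iff, Set.mem_compl_iff, Set.mem_iUnion,
      exists_prop]
    constructor
    · rintro rfl ⟨c', hc', hx⟩; exact hc' hx.symm
    · intro hx
      by_contra hne
      exact hx ⟨ConnectedComponents.mk x, hne, rfl⟩
  rw [key]
  exact ((Set.toFinite _).isClosed_biUnion (fun c' _ => hclosed c')).isOpen_compl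

/-- Let `G` be a homeomorphism of `Σ` commuting with an involution `σ`, whose
fixed locus `Σ^σ` has finitely many connected components, permuted by `G`.  The connected
components of the fixed locus `M_G^{σ_G}` of the induced involution on the mapping torus —
which is the mapping torus of `G|_{Σ^σ}` (Statement 15) — are in natural bijection with the
cycles (orbits) of the permutation induced by `G` on the set of connected components of
`Σ^σ`: the natural map sending the orbit of the component of `z` to the component of
`[0, z]` is well defined and bijective. -/
theorem mappingTorus_components_biject_cycles (G : S ≃ₜ S) (σ : S → S)
    (hσc : Continuous σ) (hσ : Function.Involutive σ)
    (hcomm : ∀ z, (G : S → S) (σ z) = σ (G z))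
    (hfin : Finite (ConnectedComponents (FixLocus σ)))
    (p : ConnectedComponents (FixLocus σ) → ConnectedComponents (FixLocus σ))
    (hp : ∀ z : FixLocus σ,
      p (ConnectedComponents.mk z) = ConnectedComponents.mk (fixRestrict (⇑G) σ hcomm z)) :
    ∃ θ : Quot (fun a b => p a = b) →
        ConnectedComponents (MappingTorus (fixRestrict (⇑G) σ hcomm)),
      (∀ z : FixLocus σ,
        θ (Quot.mk _ (ConnectedComponents.mk z))
          = ConnectedComponents.mk
              (Quot.mk (MTRel (fixRestrict (⇑G) σ hcomm)) ((0 : unitInterval), z))) ∧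
      Function.Bijective θ := by
  classical
  set F := fixRestrict (⇑G) σ hcomm with hF
  set rel : ConnectedComponents (FixLocus σ) → ConnectedComponents (FixLocus σ) → Prop :=
    fun a b => p a = b with hrel
  -- any point [s, z] is in the same component as [0, z]
  have hseg : ∀ (z : FixLocus σ) (s : unitInterval),
      (ConnectedComponents.mk (Quot.mk (MTRel F) (s, z)))
        = ConnectedComponents.mk (Quot.mk (MTRel F) ((0 : unitInterval), z)) := by
    intro z s
    rw [ConnectedComponents.coe_eq_coe']
    have hcont : Continuous (fun t : unitInterval => Quot.mk (MTRel F) (t, z)) :=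
      continuous_quot_mk.comp (Continuous.prodMk_left z)
    have hconn := isPreconnected_range hcont
    have hsub := hconn.subset_connectedComponent
      (x := Quot.mk (MTRel F) ((0 : unitInterval), z)) ⟨0, rfl⟩
    exact hsub ⟨s, rfl⟩
  -- [0, F z] is in the same component as [0, z]
  have hstep : ∀ z : FixLocus σ,
      (ConnectedComponents.mk (Quot.mk (MTRel F) ((0 : unitInterval), F z)))
        = ConnectedComponents.mk (Quot.mk (MTRel F) ((0 : unitInterval), z)) := by
    intro z
    have hQ : Quot.mk (MTRel F) ((1 : unitInterval), z)
        = Quot.mk (MTRel F) ((0 : unitInterval), F z) := Quot.sound ⟨rfl, rfl, rfl⟩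
    rw [← hQ]; exact hseg z 1
  -- the continuous base map
  have hcont0 : Continuous (fun z : FixLocus σ =>
      (ConnectedComponents.mk (Quot.mk (MTRel F) ((0 : unitInterval), z)))) :=
    ConnectedComponents.continuous_coe.comp
      (continuous_quot_mk.comp (Continuous.prodMk_right (0 : unitInterval)))
  set θ₀ := hcont0.connectedComponentsLift with hθ₀
  have hθ₀app : ∀ z : FixLocus σ, θ₀ (ConnectedComponents.mk z)
      = ConnectedComponents.mk (Quot.mk (MTRel F) ((0 : unitInterval), z)) := fun z =>
    hcont0.connectedComponentsLift_apply_coe z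
  have hθwd : ∀ a b, rel a b → θ₀ a = θ₀ b := by
    rintro a _ rfl
    obtain ⟨z, rfl⟩ := ConnectedComponents.surjective_coe a
    rw [hp z, hθ₀app, hθ₀app, hstep]
  refine ⟨Quot.lift θ₀ hθwd, fun z => hθ₀app z, ?_, ?_⟩
  · -- injective, via a left inverse
    letI : TopologicalSpace (Quot rel) := ⊥
    haveI : DiscreteTopology (Quot rel) := ⟨rfl⟩
    haveI := discreteTopology_connectedComponents_of_finite hfin
    have hf0 : Continuous (fun q : unitInterval × FixLocus σ =>
        Quot.mk rel (ConnectedComponents.mk q.2)) :=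
      continuous_of_discreteTopology.comp
        (ConnectedComponents.continuous_coe.comp continuous_snd)
    have hfwd : ∀ a b, MTRel F a b →
        Quot.mk rel (ConnectedComponents.mk a.2) = Quot.mk rel (ConnectedComponents.mk b.2) := by
      rintro a b ⟨h1, h2, h3⟩
      rw [h3, ← hp]
      exact Quot.sound rfl
    have hfc : Continuous (Quot.lift _ hfwd) := continuous_quot_lift hfwd hf0
    set ψ := hfc.connectedComponentsLift with hψ
    have hli : Function.LeftInverse ψ (Quot.lift θ₀ hθwd) := by
      intro a
      induction a using Quot.ind with
      | _ c =>
        obtain ⟨z, rfl⟩ := ConnectedComponents.surjective_coe c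
        show ψ (θ₀ (ConnectedComponents.mk z)) = _
        rw [hθ₀app]
        exact hfc.connectedComponentsLift_apply_coe _
    exact hli.injective
  · -- surjective
    intro d
    obtain ⟨m, rfl⟩ := ConnectedComponents.surjective_coe d
    obtain ⟨⟨s, z⟩, rfl⟩ := Quot.exists_rep m
    exact ⟨Quot.mk rel (ConnectedComponents.mk z), by
      show θ₀ (ConnectedComponents.mk z) = _
      rw [hθ₀app]; exact (hseg z s).symm⟩
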